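/- arXiv:math/0504096 — 2 statements merged into one kernel-verified Lean document; each statement's English description precedes it below -/
import Mathlib

section
/- Let D, D_1, D_2, … be i.i.d. positive-integer-valued random variables with 0 < P(D is even) < 1. If E[D] < ∞, then lim_{n→∞} P((D_1, …, D_n) is graphical) = 1/2. -/
open MeasureTheory ProbabilityTheory Filter

/-- A finite sequence `d 0, …, d (n-1)` of integers is *graphical* if there exists a simple
graph on `n` vertices whose vertex degrees are exactly `d 0, …, d (n-1)`. -/
def Graphical (n : ℕ) (d : ℕ → ℕ) : Prop :=
  ∃ G : SimpleGraph (Fin n), ∀ v : Fin n, (G.neighborSet v).ncard = d (v : ℕ)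

section CombinatorialCore

open Finset

def Graphical' {n : ℕ} (d : Fin n → ℕ) : Prop :=
  ∃ G : SimpleGraph (Fin n), ∀ v : Fin n, (G.neighborSet v).ncard = d v

lemma glue {n : ℕ} (d : Fin n → ℕ) (v : Fin n) (A : Finset (Fin n)) (hv : v ∉ A)
    (hA : A.card = d v) (hd1 : ∀ i ∈ A, 1 ≤ d i)
    (h : Graphical' (fun i => if i = v then 0 else if i ∈ A then d i - 1 else d i)) :
    Graphical' d := by
  classical
  obtain ⟨G, hG⟩ := h
  have hGv : G.neighborSet v = ∅ := by
    have := hG v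
    simp only [if_pos rfl] at this
    exact (Set.ncard_eq_zero (Set.toFinite _)).mp this
  have hnadj : ∀ x, ¬ G.Adj v x := by
    intro x hx
    have : x ∈ G.neighborSet v := hx
    simp [hGv] at this
  refine ⟨⟨fun x y => G.Adj x y ∨ (x = v ∧ y ∈ A) ∨ (y = v ∧ x ∈ A), ?_, ?_⟩, ?_⟩
  · constructor; intro x y hxy
    rcases hxy with h | ⟨h1, h2⟩ | ⟨h1, h2⟩
    · exact Or.inl h.symm
    · exact Or.inr (Or.inr ⟨h1, h2⟩)
    · exact Or.inr (Or.inl ⟨h1, h2⟩)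
  · constructor; intro x hx
    rcases hx with h | ⟨h1, h2⟩ | ⟨h1, h2⟩
    · exact G.irrefl h
    · exact hv (h1 ▸ h2)
    · exact hv (h1 ▸ h2)
  · intro u
    show Set.ncard {y | G.Adj u y ∨ (u = v ∧ y ∈ A) ∨ (y = v ∧ u ∈ A)} = d u
    by_cases huv : u = v
    · have hset : {y | G.Adj u y ∨ (u = v ∧ y ∈ A) ∨ (y = v ∧ u ∈ A)} = (A : Set (Fin n)) := by
        ext y
        simp only [Set.mem_setOf_eq, Finset.mem_coe]
        constructor
        · rintro (h | ⟨-, h⟩ | ⟨h1, h2⟩)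
          · exact absurd (huv ▸ h) (hnadj y)
          · exact h
          · exact absurd h2 (huv ▸ hv)
        · intro hy; exact Or.inr (Or.inl ⟨huv, hy⟩)
      rw [hset, Set.ncard_coe_finset, hA, huv]
    · by_cases huA : u ∈ A
      · have hset : {y | G.Adj u y ∨ (u = v ∧ y ∈ A) ∨ (y = v ∧ u ∈ A)}
            = insert v (G.neighborSet u) := by
          ext y
          simp only [Set.mem_setOf_eq, Set.mem_insert_iff, SimpleGraph.mem_neighborSet]
          constructor
          · rintro (h | ⟨h1, h2⟩ | ⟨h1, h2⟩)
            · exact Or.inr h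
            · exact absurd h1 huv
            · exact Or.inl h1
          · rintro (h | h)
            · exact Or.inr (Or.inr ⟨h, huA⟩)
            · exact Or.inl h
        have hvnot : v ∉ G.neighborSet u := fun hvu => hnadj u hvu.symm
        rw [hset, Set.ncard_insert_of_notMem hvnot (Set.toFinite _)]
        have := hG u
        simp only [if_neg huv, if_pos huA] at this
        rw [this]
        exact Nat.succ_pred_eq_of_pos (hd1 u huA)
      · have hset : {y | G.Adj u y ∨ (u = v ∧ y ∈ A) ∨ (y = v ∧ u ∈ A)}
            = G.neighborSet u := by
          ext y
          simp only [Set.mem_setOf_eq, SimpleGraph.mem_neighborSet]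
          constructor
          · rintro (h | ⟨h1, h2⟩ | ⟨h1, h2⟩)
            · exact h
            · exact absurd h1 huv
            · exact absurd h2 huA
          · exact fun h => Or.inl h
        rw [hset]
        have := hG u
        simp only [if_neg huv, if_neg huA] at this
        exact this

lemma sum_reduce (d : Fin n → ℕ) (v : Fin n) (A : Finset (Fin n)) (hv : v ∉ A)
    (hd1 : ∀ i ∈ A, 1 ≤ d i) :
    ∑ i, (if i = v then 0 else if i ∈ A then d i - 1 else d i) + (d v + A.card) = ∑ i, d i := by
  classical
  have key : ∀ i, (if i = v then 0 else if i ∈ A then d i - 1 else d i)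
      + ((if i = v then d v else 0) + (if i ∈ A then 1 else 0)) = d i := by
    intro i
    by_cases h1 : i = v
    · subst h1
      simp [if_neg (fun h => hv h), hv]
    · by_cases h2 : i ∈ A
      · simp only [if_neg h1, if_pos h2]
        have := hd1 i h2
        omega
      · simp [h1, h2]
  calc ∑ i, (if i = v then 0 else if i ∈ A then d i - 1 else d i) + (d v + A.card)
      = ∑ i, (if i = v then 0 else if i ∈ A then d i - 1 else d i)
        + ((∑ i : Fin n, if i = v then d v else 0) + (∑ i : Fin n, if i ∈ A then 1 else 0)) := by
        congr 1
        congr 1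
        · rw [Finset.sum_ite_eq' univ v (fun _ => d v)]
          simp
        · rw [Finset.sum_ite_mem]
          simp [Finset.univ_inter]
    _ = ∑ i, ((if i = v then 0 else if i ∈ A then d i - 1 else d i)
        + ((if i = v then d v else 0) + (if i ∈ A then 1 else 0))) := by
        rw [Finset.sum_add_distrib, Finset.sum_add_distrib]
    _ = ∑ i, d i := by exact Finset.sum_congr rfl (fun i _ => key i)
lemma bounded_graphical {n : ℕ} : ∀ (S : ℕ) (d : Fin n → ℕ), ∑ i, d i = S → Even S →
    (univ.sup d) * (univ.sup d + 1) ≤ S → Graphical' d := by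
  classical
  intro S
  induction S using Nat.strong_induction_on with
  | _ S IH =>
  intro d hS hEven hC
  rcases Nat.eq_zero_or_pos S with h0 | hSpos
  · subst h0
    have hz := (Finset.sum_eq_zero_iff).mp hS
    refine ⟨⊥, fun v => ?_⟩
    have hbot : (⊥ : SimpleGraph (Fin n)).neighborSet v = ∅ := by
      ext y; simp [SimpleGraph.neighborSet]
    rw [hbot, Set.ncard_empty, hz v (mem_univ v)]
  · obtain ⟨Δ, hΔdef⟩ : ∃ Δ, univ.sup d = Δ := ⟨_, rfl⟩
    rw [hΔdef] at hC
    obtain ⟨i0, -, hi0⟩ := Finset.exists_ne_zero_of_sum_ne_zero (by omega : ∑ i, d i ≠ 0)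
    have hne : (univ : Finset (Fin n)).Nonempty := ⟨i0, mem_univ i0⟩
    obtain ⟨v, -, hv⟩ := Finset.exists_mem_eq_sup univ hne d
    rw [hΔdef] at hv
    have hle : ∀ i, d i ≤ Δ := fun i => hΔdef ▸ Finset.le_sup (mem_univ i)
    have hΔpos : 1 ≤ Δ := le_trans (Nat.pos_of_ne_zero hi0) (hle i0)
    set P : Finset (Fin n) := univ.filter (fun i => d i ≠ 0) with hPdef
    have hSP : S ≤ P.card * Δ := by
      have h1 : ∑ i ∈ P, d i = ∑ i, d i := Finset.sum_filter_ne_zero univ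
      have h2 : ∑ i ∈ P, d i ≤ P.card • Δ :=
        Finset.sum_le_card_nsmul P d Δ (fun x _ => hle x)
      rw [smul_eq_mul] at h2
      omega
    have hPcard : Δ + 1 ≤ P.card := by
      have : (Δ + 1) * Δ ≤ P.card * Δ := by
        calc (Δ + 1) * Δ = Δ * (Δ + 1) := by ring
        _ ≤ S := hC
        _ ≤ P.card * Δ := hSP
      exact Nat.le_of_mul_le_mul_right this hΔpos
    have hvP : v ∈ P := by
      simp only [hPdef, mem_filter, mem_univ, true_and]
      omega
    have hPecard : Δ ≤ (P.erase v).card := by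
      rw [Finset.card_erase_of_mem hvP]; omega
    set M : Finset (Fin n) := univ.filter (fun i => d i = Δ) with hMdef
    have hvM : v ∈ M := Finset.mem_filter.mpr ⟨mem_univ v, hv.symm⟩
    have hMP : M.erase v ⊆ P.erase v := by
      apply Finset.erase_subset_erase
      intro i hi
      simp only [hMdef, mem_filter, mem_univ, true_and] at hi
      simp only [hPdef, mem_filter, mem_univ, true_and]
      omega
    by_cases hcase : (M.erase v).card ≤ Δ
    · -- Case 1 : few other max vertices; after reduction max drops
      obtain ⟨A, hA1, hA2, hA3⟩ := Finset.exists_subsuperset_card_eq hMP hcase hPecard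
      have hvA : v ∉ A := fun h => (Finset.mem_erase.mp (hA2 h)).1 rfl
      have hd1 : ∀ i ∈ A, 1 ≤ d i := by
        intro i h
        have := (Finset.mem_filter.mp (Finset.mem_erase.mp (hA2 h)).2).2
        omega
      set d' : Fin n → ℕ := fun i => if i = v then 0 else if i ∈ A then d i - 1 else d i
        with hd'def
      have hsum := sum_reduce d v A hvA hd1
      rw [hS, ← hv, hA3] at hsum
      set S' := ∑ i, d' i with hS'def
      have hb : ∀ i, d' i ≤ Δ - 1 := by
        intro i
        simp only [hd'def]
        by_cases h1 : i = v
        · simp [h1]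
        · by_cases h2 : i ∈ A
          · simp only [if_neg h1, if_pos h2]
            have := hle i; omega
          · simp only [if_neg h1, if_neg h2]
            have h3 : d i ≠ Δ := by
              intro he
              exact h2 (hA1 (Finset.mem_erase.mpr ⟨h1, by simp [hMdef, he]⟩))
            have := hle i; omega
      have hsup' : univ.sup d' ≤ Δ - 1 := Finset.sup_le (fun i _ => hb i)
      have hC' : (univ.sup d') * (univ.sup d' + 1) ≤ S' := by
        obtain ⟨e, rfl⟩ : ∃ e, Δ = e + 1 := ⟨Δ - 1, by omega⟩
        have h1 : (univ.sup d') * (univ.sup d' + 1) ≤ e * (e + 1) :=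
          Nat.mul_le_mul (by omega) (by omega)
        have h2 : e * (e + 1) ≤ S' := by nlinarith [hC, hsum]
        omega
      have hEven' : Even S' := by
        rw [Nat.even_iff] at hEven ⊢; omega
      have hrec : Graphical' d' := IH S' (by omega) d' rfl hEven' hC'
      exact glue d v A hvA (by rw [hA3, hv]) hd1 hrec
    · push_neg at hcase
      obtain ⟨A, hA2, hA3⟩ := Finset.exists_subset_card_eq (le_of_lt hcase)
      have hvA : v ∉ A := fun h => (Finset.mem_erase.mp (hA2 h)).1 rfl
      have hAM : ∀ i ∈ A, d i = Δ := by
        intro i h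
        exact (Finset.mem_filter.mp (Finset.mem_erase.mp (hA2 h)).2).2
      have hd1 : ∀ i ∈ A, 1 ≤ d i := fun i h => by rw [hAM i h]; omega
      set d' : Fin n → ℕ := fun i => if i = v then 0 else if i ∈ A then d i - 1 else d i
        with hd'def
      have hsum := sum_reduce d v A hvA hd1
      rw [hS, ← hv, hA3] at hsum
      set S' := ∑ i, d' i with hS'def
      have hEven' : Even S' := by rw [Nat.even_iff] at hEven ⊢; omega
      have hd'le : ∀ i, d' i ≤ Δ := by
        intro i
        simp only [hd'def]
        by_cases h1 : i = v
        · simp [h1]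
        · by_cases h2 : i ∈ A
          · simp only [if_neg h1, if_pos h2]
            have := hle i; omega
          · simp only [if_neg h1, if_neg h2]
            exact hle i
      by_cases h2 : Δ * Δ + 3 * Δ ≤ S
      · -- Case 2a : plenty of slack, reduce once
        have hsup' : univ.sup d' ≤ Δ := Finset.sup_le (fun i _ => hd'le i)
        have hC' : (univ.sup d') * (univ.sup d' + 1) ≤ S' := by
          have h1 : (univ.sup d') * (univ.sup d' + 1) ≤ Δ * (Δ + 1) :=
            Nat.mul_le_mul (by omega) (by omega)
          have h2' : Δ * (Δ + 1) ≤ S' := by nlinarith [hsum]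
          omega
        have hrec : Graphical' d' := IH S' (by omega) d' rfl hEven' hC'
        exact glue d v A hvA (by rw [hA3, hv]) hd1 hrec
      · -- Case 2b : tight near-regular case, reduce twice
        push_neg at h2
        have hMcard : M.card = Δ + 2 := by
          have hMS : M.card * Δ ≤ S := by
            have h1 : ∑ i ∈ M, d i = M.card * Δ := by
              rw [Finset.sum_congr rfl (fun i hi => (Finset.mem_filter.mp hi).2)]
              simp [mul_comm, hMdef]
            have h3 : ∑ i ∈ M, d i ≤ ∑ i, d i :=
              Finset.sum_le_sum_of_subset (Finset.subset_univ M)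
            omega
          have hlow : Δ + 2 ≤ M.card := by
            have := Finset.card_erase_of_mem hvM
            have := Finset.card_pos.mpr ⟨v, hvM⟩
            omega
          have hup : M.card < Δ + 3 := by
            by_contra hcon
            push_neg at hcon
            have : (Δ + 3) * Δ ≤ M.card * Δ := Nat.mul_le_mul_right Δ hcon
            nlinarith
          omega
        have hΔ2 : 2 ≤ Δ := by
          by_contra hcon
          have hΔ1 : Δ = 1 := by omega
          rw [Nat.even_iff] at hEven
          have hMS : M.card * Δ ≤ S := by
            have h1 : ∑ i ∈ M, d i = M.card * Δ := by
              rw [Finset.sum_congr rfl (fun i hi => (Finset.mem_filter.mp hi).2)]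
              simp [mul_comm, hMdef]
            have h3 : ∑ i ∈ M, d i ≤ ∑ i, d i :=
              Finset.sum_le_sum_of_subset (Finset.subset_univ M)
            omega
          rw [hΔ1] at h2 hMcard hMS
          omega
        -- the sum of degrees outside M
        set t := ∑ i ∈ univ \ M, d i with htdef
        have hSt : M.card * Δ + t = S := by
          have h1 : ∑ i ∈ M, d i = M.card * Δ := by
            rw [Finset.sum_congr rfl (fun i hi => (Finset.mem_filter.mp hi).2)]
            simp [mul_comm, hMdef]
          have h4 : ∑ i ∈ univ \ M, d i + ∑ i ∈ M, d i = ∑ i, d i :=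
            Finset.sum_sdiff (Finset.subset_univ M)
          omega
        have ht : t < Δ := by
          have hq : (Δ + 2) * Δ = Δ * Δ + 2 * Δ := by ring
          rw [hMcard] at hSt
          omega
        have hothers : ∀ i, i ∉ M → d i ≤ Δ - 2 := by
          intro i hiM
          by_contra hcon
          have hne : d i ≠ Δ := by
            intro he; exact hiM (by simp [hMdef, he])
          have hieq : d i = Δ - 1 := by have := hle i; omega
          have hti : d i ≤ t := by
            apply Finset.single_le_sum (f := d) (fun j _ => Nat.zero_le _)
            simp [Finset.mem_sdiff, hiM]
          -- parity contradiction
          have heven2 : Even (Δ * Δ + 3 * Δ) := by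
            rcases Nat.even_or_odd Δ with he | ho
            · exact Even.add (he.mul_left Δ) (he.mul_left 3)
            · have h5 : Odd (Δ * Δ) := ho.mul ho
              have h6 : Odd (3 * Δ) := (by decide : Odd 3).mul ho
              exact Odd.add_odd h5 h6
          rw [Nat.even_iff] at hEven heven2
          have hq : (Δ + 2) * Δ = Δ * Δ + 2 * Δ := by ring
          rw [hMcard] at hSt
          -- t = Δ - 1 exactly, S = Δ*Δ + 3Δ - 1, contradicts parity
          generalize hQ : Δ * Δ = Q at *
          omega
        -- find the left-over max vertex w
        have hMecard : (M.erase v).card = Δ + 1 := by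
          rw [Finset.card_erase_of_mem hvM, hMcard]; omega
        have hwcard : ((M.erase v) \ A).card = 1 := by
          rw [Finset.card_sdiff_of_subset hA2, hMecard, hA3]; omega
        obtain ⟨w, hw⟩ := Finset.card_eq_one.mp hwcard
        have hwmem : w ∈ (M.erase v) \ A := by rw [hw]; exact Finset.mem_singleton_self w
        have hwM : w ∈ M.erase v := (Finset.mem_sdiff.mp hwmem).1
        have hwA : w ∉ A := (Finset.mem_sdiff.mp hwmem).2
        have hwv : w ≠ v := (Finset.mem_erase.mp hwM).1
        have hdw : d w = Δ := (Finset.mem_filter.mp (Finset.mem_erase.mp hwM).2).2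
        have hd'w : d' w = Δ := by simp only [hd'def, if_neg hwv, if_neg hwA, hdw]
        have hd'1 : ∀ i ∈ A, 1 ≤ d' i := by
          intro i hi
          have hiv : i ≠ v := fun h => hvA (h ▸ hi)
          simp only [hd'def, if_neg hiv, if_pos hi]
          rw [hAM i hi]; omega
        set d'' : Fin n → ℕ := fun i => if i = w then 0 else if i ∈ A then d' i - 1 else d' i
          with hd''def
        have hsum2 := sum_reduce d' w A hwA hd'1
        rw [hd'w, hA3] at hsum2
        set S'' := ∑ i, d'' i with hS''def
        rw [← hS'def] at hsum2
        have hEven'' : Even S'' := by rw [Nat.even_iff] at hEven ⊢; omega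
        -- M is exactly {v, w} ∪ A
        have hMeq : M = insert v (insert w A) := by
          symm
          apply Finset.eq_of_subset_of_card_le
          · intro i hi
            rcases Finset.mem_insert.mp hi with h | hi2
            · exact h ▸ hvM
            rcases Finset.mem_insert.mp hi2 with h | hi3
            · exact h ▸ (Finset.mem_erase.mp hwM).2
            · exact (Finset.mem_erase.mp (hA2 hi3)).2
          · rw [Finset.card_insert_of_notMem, Finset.card_insert_of_notMem hwA, hA3, hMcard]
            intro hvin
            rcases Finset.mem_insert.mp hvin with h | h
            · exact hwv h.symm
            · exact hvA h
        have hb : ∀ i, d'' i ≤ Δ - 2 := by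
          intro i
          simp only [hd''def, hd'def]
          by_cases h1 : i = w
          · simp [h1]
          · by_cases hA' : i ∈ A
            · have hiv : i ≠ v := fun h => hvA (h ▸ hA')
              simp only [if_neg h1, if_pos hA', if_neg hiv]
              rw [hAM i hA']
              omega
            · simp only [if_neg h1, if_neg hA']
              by_cases h3 : i = v
              · simp [h3]
              · simp only [if_neg h3, if_neg hA']
                apply hothers
                rw [hMeq]
                intro hmem
                rcases Finset.mem_insert.mp hmem with h | hmem2
                · exact h3 h
                rcases Finset.mem_insert.mp hmem2 with h | h
                · exact h1 h
                · exact hA' h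
        have hsup'' : univ.sup d'' ≤ Δ - 2 := Finset.sup_le (fun i _ => hb i)
        have hC'' : (univ.sup d'') * (univ.sup d'' + 1) ≤ S'' := by
          obtain ⟨e, rfl⟩ : ∃ e, Δ = e + 2 := ⟨Δ - 2, by omega⟩
          have h5 : (univ.sup d'') * (univ.sup d'' + 1) ≤ e * (e + 1) :=
            Nat.mul_le_mul (by omega) (by omega)
          have h6 : e * (e + 1) ≤ S'' := by
            rw [hMcard] at hSt
            have hq : (e + 2 + 2) * (e + 2) = e * e + 6 * e + 8 := by ring
            have hq2 : e * (e + 1) = e * e + e := by ring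
            generalize hQ : e * e = Q at *
            omega
          omega
        have hrec'' : Graphical' d'' := IH S'' (by omega) d'' rfl hEven'' hC''
        have hrec' : Graphical' d' := glue d' w A hwA (by rw [hA3, hd'w]) hd'1 hrec''
        exact glue d v A hvA (by rw [hA3, hv]) hd1 hrec'

lemma peel {n K : ℕ} : ∀ (B : Finset (Fin n)) (d : Fin n → ℕ),
    Even (∑ i, d i) →
    (∀ i, i ∉ B → d i ≤ K) →
    (∑ i ∈ B, d i ≤ (univ.filter (fun i => i ∉ B ∧ 1 ≤ d i)).card) →
    (K * (K + 1) + 2 * ∑ i ∈ B, d i ≤ ∑ i, d i) →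
    Graphical' d := by
  classical
  intro B
  induction B using Finset.induction_on with
  | empty =>
    intro d hEven hK _ hS
    apply bounded_graphical (∑ i, d i) d rfl hEven
    have hsup : univ.sup d ≤ K := Finset.sup_le (fun i _ => hK i (by simp))
    calc univ.sup d * (univ.sup d + 1) ≤ K * (K + 1) := Nat.mul_le_mul hsup (by omega)
    _ ≤ ∑ i, d i := by simpa using hS
  | @insert b B' hbB IH =>
    intro d hEven hK hcount hS
    have hsumB : ∑ i ∈ insert b B', d i = d b + ∑ i ∈ B', d i :=
      Finset.sum_insert hbB
    have hdbF : d b ≤ (univ.filter (fun i => i ∉ insert b B' ∧ 1 ≤ d i)).card := by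
      refine le_trans ?_ hcount
      omega
    obtain ⟨A, hA1, hA2⟩ := Finset.exists_subset_card_eq hdbF
    have hAmem : ∀ i ∈ A, i ∉ insert b B' ∧ 1 ≤ d i := by
      intro i hi
      exact (Finset.mem_filter.mp (hA1 hi)).2
    have hbA : b ∉ A := fun h => (hAmem b h).1 (Finset.mem_insert_self b B')
    have hd1 : ∀ i ∈ A, 1 ≤ d i := fun i h => (hAmem i h).2
    set d' : Fin n → ℕ := fun i => if i = b then 0 else if i ∈ A then d i - 1 else d i
      with hd'def
    have hsum : (∑ i, d' i) + (d b + A.card) = ∑ i, d i := sum_reduce d b A hbA hd1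
    rw [hA2] at hsum
    have hB'eq : ∑ i ∈ B', d' i = ∑ i ∈ B', d i := by
      apply Finset.sum_congr rfl
      intro i hi
      have hib : i ≠ b := fun h => hbB (h ▸ hi)
      have hiA : i ∉ A := fun h => (hAmem i h).1 (Finset.mem_insert_of_mem hi)
      simp only [hd'def, if_neg hib, if_neg hiA]
    have hgoal : Graphical' d' := by
      apply IH d'
      · rw [Nat.even_iff] at hEven ⊢; omega
      · intro i hi
        simp only [hd'def]
        by_cases h1 : i = b
        · simp [h1]
        · by_cases h2 : i ∈ A
          · simp only [if_neg h1, if_pos h2]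
            have := hK i ((hAmem i h2).1); omega
          · simp only [if_neg h1, if_neg h2]
            exact hK i (fun hmem => by
              rcases Finset.mem_insert.mp hmem with h | h
              · exact h1 h
              · exact hi h)
      · rw [hB'eq]
        have hsub : (univ.filter (fun i => i ∉ insert b B' ∧ 1 ≤ d i)) \ A ⊆
            univ.filter (fun i => i ∉ B' ∧ 1 ≤ d' i) := by
          intro i hi
          obtain ⟨hiF, hiA⟩ := Finset.mem_sdiff.mp hi
          obtain ⟨hiI, hid⟩ := (Finset.mem_filter.mp hiF).2
          have hib : i ≠ b := fun h => hiI (h ▸ Finset.mem_insert_self b B')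
          refine Finset.mem_filter.mpr ⟨mem_univ i, fun h => hiI (Finset.mem_insert_of_mem h), ?_⟩
          simp only [hd'def, if_neg hib, if_neg hiA]
          exact hid
        have hcard1 := Finset.card_le_card hsub
        have hcard2 := Finset.le_card_sdiff A (univ.filter (fun i => i ∉ insert b B' ∧ 1 ≤ d i))
        omega
      · rw [hB'eq]
        omega
    exact glue d b A hbA hA2 hd1 hgoal

lemma main_comb {n K : ℕ} (d : Fin n → ℕ) (hpos : ∀ i, 1 ≤ d i)
    (hEven : Even (∑ i, d i))
    (hW : 4 * (∑ i, if K < d i then d i else 0) ≤ n)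
    (hn : 4 * (K * (K + 1)) ≤ n) : Graphical' d := by
  classical
  set B : Finset (Fin n) := univ.filter (fun i => K < d i) with hBdef
  have hWeq : ∑ i ∈ B, d i = ∑ i, if K < d i then d i else 0 := by
    rw [Finset.sum_filter]
  have hcardB : B.card ≤ ∑ i ∈ B, d i := by
    calc B.card = ∑ _i ∈ B, 1 := by simp
    _ ≤ ∑ i ∈ B, d i := Finset.sum_le_sum (fun i _ => hpos i)
  have hnsum : n ≤ ∑ i, d i := by
    calc n = ∑ _i : Fin n, 1 := by simp
    _ ≤ ∑ i, d i := Finset.sum_le_sum (fun i _ => hpos i)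
  apply peel B d hEven
  · intro i hi
    simp only [hBdef, mem_filter, mem_univ, true_and, not_lt] at hi
    exact hi
  · have hfeq : univ.filter (fun i => i ∉ B ∧ 1 ≤ d i) = univ \ B := by
      ext i
      simp [hpos i]
    rw [hfeq, Finset.card_sdiff_of_subset (Finset.subset_univ B)]
    simp only [Finset.card_univ, Fintype.card_fin]
    omega
  · omega

lemma graphical_iff_aux {n : ℕ} (d : ℕ → ℕ) :
    Graphical n d ↔ Graphical' (fun i : Fin n => d (i : ℕ)) := Iff.rfl

lemma graphical_even {n : ℕ} (d : ℕ → ℕ) (h : Graphical n d) :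
    Even (∑ i ∈ Finset.range n, d i) := by
  classical
  obtain ⟨G, hG⟩ := h
  letI : DecidableRel G.Adj := fun a b => Classical.dec _
  have hdeg : ∀ v : Fin n, G.degree v = d (v : ℕ) := by
    intro v
    rw [← hG v, ← SimpleGraph.card_neighborSet_eq_degree, ← Nat.card_eq_fintype_card,
      Nat.card_coe_set_eq]
  have h2 : ∑ v : Fin n, G.degree v = 2 * G.edgeFinset.card :=
    SimpleGraph.sum_degrees_eq_twice_card_edges G
  have h3 : ∑ i ∈ Finset.range n, d i = ∑ v : Fin n, G.degree v := by
    rw [← Fin.sum_univ_eq_sum_range]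
    exact Finset.sum_congr rfl (fun v _ => (hdeg v).symm)
  rw [h3, h2]
  exact even_two_mul _


end CombinatorialCore

lemma parity_tendsto {Ω : Type*} [MeasurableSpace Ω] (μ : Measure Ω) [IsProbabilityMeasure μ]
    (D : ℕ → Ω → ℕ) (hmeas : ∀ i, Measurable (D i))
    (hindep : iIndepFun D μ)
    (hident : ∀ i, IdentDistrib (D i) (D 0) μ μ)
    (h0 : 0 < μ {ω | Even (D 0 ω)}) (h1 : μ {ω | Even (D 0 ω)} < 1) :
    Tendsto (fun n => (μ {ω | Even (∑ i ∈ Finset.range n, D i ω)}).toReal)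
      atTop (nhds (1 / 2)) := by
  classical
  set Ev : Set ℕ := {k | Even k} with hEv
  have hEvm : MeasurableSet Ev := (Set.to_countable Ev).measurableSet
  have hEvcm : MeasurableSet Evᶜ := hEvm.compl
  set q : ℝ := (μ {ω | Even (D 0 ω)}).toReal with hq
  have hq0 : 0 < q := ENNReal.toReal_pos h0.ne' (measure_ne_top μ _)
  have hq1 : q < 1 := by
    have := (ENNReal.toReal_lt_toReal (measure_ne_top μ _) (by norm_num : (1:ENNReal) ≠ ⊤)).mpr h1
    simpa using this
  set p : ℕ → ℝ := fun n => (μ {ω | Even (∑ i ∈ Finset.range n, D i ω)}).toReal with hp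
  -- the events
  have hSmeas : ∀ n, Measurable (fun ω => ∑ i ∈ Finset.range n, D i ω) :=
    fun n => Finset.measurable_sum _ (fun i _ => hmeas i)
  have hqn : ∀ n, μ (D n ⁻¹' Ev) = μ {ω | Even (D 0 ω)} := by
    intro n
    have := (hident n).measure_mem_eq hEvm
    exact this
  have hqnc : ∀ n, (μ (D n ⁻¹' Evᶜ)).toReal = 1 - q := by
    intro n
    have hcompl : D n ⁻¹' Evᶜ = (D n ⁻¹' Ev)ᶜ := rfl
    rw [hcompl, prob_compl_eq_one_sub ((hmeas n) hEvm), hqn n]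
    rw [ENNReal.toReal_sub_of_le (le_of_lt h1) (by norm_num), ENNReal.toReal_one, hq]
  -- recursion
  have hrec : ∀ n, p (n + 1) = p n * q + (1 - p n) * (1 - q) := by
    intro n
    have hind : IndepFun (∑ j ∈ Finset.range n, D j) (D n) μ :=
      hindep.indepFun_finsetSum_of_notMem hmeas (by simp)
    have hsum_apply : (∑ j ∈ Finset.range n, D j) = fun ω => ∑ j ∈ Finset.range n, D j ω := by
      ext ω; simp [Finset.sum_apply]
    set Sn : Ω → ℕ := fun ω => ∑ j ∈ Finset.range n, D j ω with hSn
    have hind' : IndepFun Sn (D n) μ := by rwa [hsum_apply] at hind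
    have hsetEq : {ω | Even (∑ i ∈ Finset.range (n+1), D i ω)}
        = (Sn ⁻¹' Ev ∩ D n ⁻¹' Ev) ∪ (Sn ⁻¹' Evᶜ ∩ D n ⁻¹' Evᶜ) := by
      ext ω
      simp only [Set.mem_setOf_eq, Set.mem_union, Set.mem_inter_iff, Set.mem_preimage,
        Set.mem_compl_iff, hSn, hEv, Finset.sum_range_succ, Set.mem_setOf_eq]
      rw [Nat.even_add]
      by_cases hA : Even (∑ j ∈ Finset.range n, D j ω) <;> by_cases hB : Even (D n ω) <;>
        simp [hA, hB]
    have hdisj : Disjoint (Sn ⁻¹' Ev ∩ D n ⁻¹' Ev) (Sn ⁻¹' Evᶜ ∩ D n ⁻¹' Evᶜ) := by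
      apply Set.disjoint_left.mpr
      rintro ω ⟨h1', -⟩ ⟨h2', -⟩
      exact h2' h1'
    have hm2 : MeasurableSet (Sn ⁻¹' Evᶜ ∩ D n ⁻¹' Evᶜ) :=
      ((hSmeas n) hEvcm).inter ((hmeas n) hEvcm)
    have hunion : μ ((Sn ⁻¹' Ev ∩ D n ⁻¹' Ev) ∪ (Sn ⁻¹' Evᶜ ∩ D n ⁻¹' Evᶜ))
        = μ (Sn ⁻¹' Ev ∩ D n ⁻¹' Ev) + μ (Sn ⁻¹' Evᶜ ∩ D n ⁻¹' Evᶜ) :=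
      measure_union hdisj hm2
    have hprod1 : μ (Sn ⁻¹' Ev ∩ D n ⁻¹' Ev) = μ (Sn ⁻¹' Ev) * μ (D n ⁻¹' Ev) :=
      hind'.measure_inter_preimage_eq_mul Ev Ev hEvm hEvm
    have hprod2 : μ (Sn ⁻¹' Evᶜ ∩ D n ⁻¹' Evᶜ) = μ (Sn ⁻¹' Evᶜ) * μ (D n ⁻¹' Evᶜ) :=
      hind'.measure_inter_preimage_eq_mul Evᶜ Evᶜ hEvcm hEvcm
    have hPn : (μ (Sn ⁻¹' Ev)).toReal = p n := rfl
    have hPnc : (μ (Sn ⁻¹' Evᶜ)).toReal = 1 - p n := by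
      have hcompl : Sn ⁻¹' Evᶜ = (Sn ⁻¹' Ev)ᶜ := rfl
      rw [hcompl, prob_compl_eq_one_sub ((hSmeas n) hEvm),
        ENNReal.toReal_sub_of_le prob_le_one (by norm_num), ENNReal.toReal_one, hPn]
    have hstep : p (n + 1) = (μ (Sn ⁻¹' Ev) * μ (D n ⁻¹' Ev)).toReal
        + (μ (Sn ⁻¹' Evᶜ) * μ (D n ⁻¹' Evᶜ)).toReal := by
      rw [hp]
      simp only
      rw [hsetEq, hunion, hprod1, hprod2,
        ENNReal.toReal_add (ENNReal.mul_ne_top (measure_ne_top μ _) (measure_ne_top μ _))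
          (ENNReal.mul_ne_top (measure_ne_top μ _) (measure_ne_top μ _))]
    rw [hstep, ENNReal.toReal_mul, ENNReal.toReal_mul, hPn, hPnc, hqnc n]
    have : (μ (D n ⁻¹' Ev)).toReal = q := by rw [hqn n, hq]
    rw [this]
  -- p 0 = 1
  have hp0 : p 0 = 1 := by
    have : {ω | Even (∑ i ∈ Finset.range 0, D i ω)} = Set.univ := by
      ext ω; simp
    rw [hp]
    simp only [this, measure_univ, ENNReal.toReal_one]
  -- closed form
  have hclosed : ∀ n, p n - 1/2 = (2*q - 1)^n * (1/2) := by
    intro n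
    induction n with
    | zero => rw [hp0]; norm_num
    | succ n ih =>
      rw [hrec n, pow_succ]
      nlinarith [ih]
  have habs : |2*q - 1| < 1 := by
    rw [abs_lt]; constructor <;> nlinarith
  have hlim : Tendsto (fun n => (2*q - 1)^n * (1/2 : ℝ)) atTop (nhds 0) := by
    have := tendsto_pow_atTop_nhds_zero_of_abs_lt_one habs
    simpa using this.mul_const (1/2 : ℝ)
  have : Tendsto (fun n => p n - 1/2) atTop (nhds 0) := by
    simp only [hclosed]; exact hlim
  have := this.add_const (1/2 : ℝ)
  simpa using this

lemma trunc_whp {Ω : Type*} [MeasurableSpace Ω] (μ : Measure Ω) [IsProbabilityMeasure μ]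
    (D : ℕ → Ω → ℕ) (hmeas : ∀ i, Measurable (D i))
    (hindep : iIndepFun D μ)
    (hident : ∀ i, IdentDistrib (D i) (D 0) μ μ)
    (hint : Integrable (fun ω => (D 0 ω : ℝ)) μ) :
    ∃ K : ℕ, ∃ T : ℕ → Set Ω, Monotone T ∧ (∀ N, MeasurableSet (T N)) ∧
      Tendsto (fun N => μ (T N)) atTop (nhds 1) ∧
      (∀ N, ∀ ω ∈ T N, ∀ n, N ≤ n →
        4 * (∑ i ∈ Finset.range n, if K < D i ω then D i ω else 0) ≤ n) := by
  classical
  -- Step 1: choose the truncation level K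
  set F : ℕ → Ω → ℝ := fun K ω => if K < D 0 ω then (D 0 ω : ℝ) else 0 with hF
  have hFmeas : ∀ K, Measurable (F K) := by
    intro K
    exact (measurable_from_nat (f := fun k => if K < k then (k : ℝ) else 0)).comp (hmeas 0)
  have hFbound : ∀ K, ∀ ω, ‖F K ω‖ ≤ ‖(D 0 ω : ℝ)‖ := by
    intro K ω
    simp only [hF]
    split
    · simp
    · simp [Real.norm_eq_abs]
  have hFlim : ∀ ω, Tendsto (fun K => F K ω) atTop (nhds 0) := by
    intro ω
    apply Tendsto.congr' (f₁ := fun _ => (0:ℝ))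
    · filter_upwards [eventually_ge_atTop (D 0 ω)] with K hK
      simp only [hF]
      rw [if_neg (by omega)]
    · exact tendsto_const_nhds
  have hIlim : Tendsto (fun K => ∫ ω, F K ω ∂μ) atTop (nhds 0) := by
    have h := MeasureTheory.tendsto_integral_of_dominated_convergence
      (F := F) (f := fun _ => (0:ℝ)) (μ := μ) (fun ω => ‖(D 0 ω : ℝ)‖)
      (fun K => (hFmeas K).aestronglyMeasurable) hint.norm
      (fun K => Filter.Eventually.of_forall (hFbound K))
      (Filter.Eventually.of_forall hFlim)
    simpa using h
  have hex : ∃ K, ∫ ω, F K ω ∂μ < 1/8 := by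
    have := hIlim.eventually (eventually_lt_nhds (by norm_num : (0:ℝ) < 1/8))
    exact this.exists
  obtain ⟨K, hK⟩ := hex
  -- Step 2: strong law for the truncated variables
  set φ : ℕ → ℝ := fun k => if K < k then (k : ℝ) else 0 with hφ
  have hφm : Measurable φ := measurable_from_nat
  set Y : ℕ → Ω → ℝ := fun i => φ ∘ (D i) with hY
  have hYmeas : ∀ i, Measurable (Y i) := fun i => hφm.comp (hmeas i)
  have hYint : Integrable (Y 0) μ := by
    apply hint.mono (hYmeas 0).aestronglyMeasurable
    exact Filter.Eventually.of_forall (fun ω => hFbound K ω)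
  have hYindep : Pairwise (fun i j => IndepFun (Y i) (Y j) μ) := by
    intro i j hij
    exact (hindep.indepFun hij).comp hφm hφm
  have hYident : ∀ i, IdentDistrib (Y i) (Y 0) μ μ := fun i => (hident i).comp hφm
  have hSLLN := ProbabilityTheory.strong_law_ae Y hYint hYindep hYident
  have hEY : ∫ ω, Y 0 ω ∂μ < 1/8 := hK
  -- Step 3: the good events
  set T : ℕ → Set Ω := fun N => {ω | ∀ n, N ≤ n →
    4 * (∑ i ∈ Finset.range n, if K < D i ω then D i ω else 0) ≤ n} with hT
  have hTmono : Monotone T := by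
    intro N M hNM ω hω n hn
    exact hω n (le_trans hNM hn)
  have hTmeas : ∀ N, MeasurableSet (T N) := by
    intro N
    have : T N = ⋂ n, {ω | N ≤ n → 4 * (∑ i ∈ Finset.range n,
        if K < D i ω then D i ω else 0) ≤ n} := by
      ext ω; simp [hT, Set.mem_iInter]
    rw [this]
    apply MeasurableSet.iInter
    intro n
    by_cases hn : N ≤ n
    · have : {ω | N ≤ n → 4 * (∑ i ∈ Finset.range n,
          if K < D i ω then D i ω else 0) ≤ n}
          = (fun ω => ∑ i ∈ Finset.range n, if K < D i ω then D i ω else 0) ⁻¹'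
            {k | 4 * k ≤ n} := by
        ext ω; simp [hn]
      rw [this]
      have hm : Measurable (fun ω => ∑ i ∈ Finset.range n,
          if K < D i ω then D i ω else 0) := by
        apply Finset.measurable_sum
        intro i _
        exact (measurable_from_nat (f := fun k => if K < k then k else 0)).comp (hmeas i)
      exact hm ((Set.to_countable _).measurableSet)
    · have : {ω | N ≤ n → 4 * (∑ i ∈ Finset.range n,
          if K < D i ω then D i ω else 0) ≤ n} = Set.univ := by
        ext ω; simp [hn]
      rw [this]; exact MeasurableSet.univ
  -- a.s. membership in the union
  have hae : ∀ᵐ ω ∂μ, ω ∈ ⋃ N, T N := by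
    filter_upwards [hSLLN] with ω hω
    have hlt : ∀ᶠ (n : ℕ) in atTop, (n:ℝ)⁻¹ • ∑ i ∈ Finset.range n, Y i ω < 1/4 := by
      apply hω.eventually (eventually_lt_nhds (by linarith : (∫ ω, Y 0 ω ∂μ) < 1/4))
    obtain ⟨N, hN⟩ := eventually_atTop.mp (hlt.and (eventually_ge_atTop 1))
    refine Set.mem_iUnion.mpr ⟨N, ?_⟩
    intro n hn
    obtain ⟨h1, h2⟩ := hN n hn
    have hsum : ∑ i ∈ Finset.range n, Y i ω
        = ((∑ i ∈ Finset.range n, if K < D i ω then D i ω else 0 : ℕ) : ℝ) := by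
      rw [Nat.cast_sum]
      apply Finset.sum_congr rfl
      intro i _
      simp only [hY, hφ, Function.comp_apply, apply_ite (fun k : ℕ => (k : ℝ))]
      norm_num
    rw [hsum, smul_eq_mul] at h1
    have hnpos : (0:ℝ) < n := by exact_mod_cast h2
    rw [inv_mul_lt_iff₀ hnpos] at h1
    have : 4 * ((∑ i ∈ Finset.range n, if K < D i ω then D i ω else 0 : ℕ) : ℝ) < n := by
      linarith
    exact_mod_cast this.le
  have hUnion : μ (⋃ N, T N) = 1 := by
    have hUmeas : MeasurableSet (⋃ N, T N) := MeasurableSet.iUnion hTmeas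
    have : μ (⋃ N, T N)ᶜ = 0 := by
      rw [← MeasureTheory.mem_ae_iff]
      exact hae
    have h2 := measure_compl hUmeas (measure_ne_top μ _)
    rw [this, measure_univ] at h2
    have h4 : μ (⋃ N, T N) ≤ 1 := prob_le_one
    exact le_antisymm h4 (by rwa [eq_comm, tsub_eq_zero_iff_le] at h2)
  have hTlim : Tendsto (fun N => μ (T N)) atTop (nhds 1) := by
    have := MeasureTheory.tendsto_measure_iUnion_atTop (μ := μ) hTmono
    rw [hUnion] at this
    exact this
  exact ⟨K, T, hTmono, hTmeas, hTlim, fun N ω hω => hω⟩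

/-- Part (d), first case: if `D, D_1, D_2, …` are i.i.d. positive-integer-valued with
`0 < P(D even) < 1` and `E[D] < ∞`, then `P((D_1,…,D_n) graphical) → 1/2`. -/
theorem graphical_tendsto_half_of_integrable {Ω : Type*} [MeasurableSpace Ω]
    (μ : Measure Ω) [IsProbabilityMeasure μ]
    (D : ℕ → Ω → ℕ) (hmeas : ∀ i, Measurable (D i))
    (hindep : iIndepFun D μ)
    (hident : ∀ i, IdentDistrib (D i) (D 0) μ μ)
    (hpos : ∀ i ω, 1 ≤ D i ω)
    (h0 : 0 < μ {ω | Even (D 0 ω)}) (h1 : μ {ω | Even (D 0 ω)} < 1)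
    (hint : Integrable (fun ω => (D 0 ω : ℝ)) μ) :
    Tendsto (fun n => μ {ω | Graphical n (fun i => D i ω)}) atTop (nhds (1 / 2)) := by
  classical
  obtain ⟨K, T, hTmono, hTmeas, hTlim, hTprop⟩ := trunc_whp μ D hmeas hindep hident hint
  have hpar := parity_tendsto μ D hmeas hindep hident h0 h1
  set E : ℕ → Set Ω := fun n => {ω | Even (∑ i ∈ Finset.range n, D i ω)} with hE
  set g : ℕ → Set Ω := fun n => {ω | Graphical n (fun i => D i ω)} with hg
  have hEmeas : ∀ n, MeasurableSet (E n) := by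
    intro n
    have hm : Measurable (fun ω => ∑ i ∈ Finset.range n, D i ω) :=
      Finset.measurable_sum _ (fun i _ => hmeas i)
    exact hm ((Set.to_countable {k : ℕ | Even k}).measurableSet)
  have hupper : ∀ n, g n ⊆ E n := by
    intro n ω hω
    exact graphical_even (fun i => D i ω) hω
  have hlower : ∀ n, 4 * (K * (K + 1)) ≤ n → E n ∩ T n ⊆ g n := by
    intro n hn ω hω
    obtain ⟨hωE, hωT⟩ := hω
    show Graphical n (fun i => D i ω)
    rw [graphical_iff_aux]
    apply main_comb (K := K)
    · intro i; exact hpos _ ω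
    · rw [Fin.sum_univ_eq_sum_range (fun j => D j ω)]
      exact hωE
    · rw [Fin.sum_univ_eq_sum_range (fun j => if K < D j ω then D j ω else 0)]
      exact hTprop n ω hωT n le_rfl
    · exact hn
  -- real-valued sequences
  set a : ℕ → ℝ := fun n => (μ (g n)).toReal with ha
  set p : ℕ → ℝ := fun n => (μ (E n)).toReal with hp
  set tr : ℕ → ℝ := fun n => (μ (T n)).toReal with htr
  have htrlim : Tendsto tr atTop (nhds 1) := by
    have h := (ENNReal.tendsto_toReal_iff (fun n => measure_ne_top μ _)
      (ENNReal.one_ne_top)).mpr hTlim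
    simpa using h
  have hup : ∀ n, a n ≤ p n := by
    intro n
    exact ENNReal.toReal_le_toReal (measure_ne_top μ _) (measure_ne_top μ _) |>.mpr
      (measure_mono (hupper n))
  have hlow : ∀ n, 4 * (K * (K + 1)) ≤ n → p n + tr n - 1 ≤ a n := by
    intro n hn
    have hinter := measure_union_add_inter (μ := μ) (E n) (hTmeas n)
    have h1' : μ (E n ∪ T n) ≤ 1 := prob_le_one
    have h2' : μ (E n ∩ T n) ≤ μ (g n) := measure_mono (hlower n hn)
    have e1 : (μ (E n ∪ T n)).toReal + (μ (E n ∩ T n)).toReal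
        = p n + tr n := by
      rw [← ENNReal.toReal_add (measure_ne_top μ _) (measure_ne_top μ _), hinter,
        ENNReal.toReal_add (measure_ne_top μ _) (measure_ne_top μ _)]
    have e2 : (μ (E n ∪ T n)).toReal ≤ 1 := by
      have := ENNReal.toReal_le_toReal (measure_ne_top μ _) ENNReal.one_ne_top |>.mpr h1'
      simpa using this
    have e3 : (μ (E n ∩ T n)).toReal ≤ a n :=
      ENNReal.toReal_le_toReal (measure_ne_top μ _) (measure_ne_top μ _) |>.mpr h2'
    linarith
  have hlowlim : Tendsto (fun n => p n + tr n - 1) atTop (nhds (1/2)) := by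
    have := (hpar.add htrlim).sub_const 1
    norm_num at this ⊢
    exact this
  have haZ : Tendsto a atTop (nhds (1/2)) := by
    apply tendsto_of_tendsto_of_tendsto_of_le_of_le' hlowlim hpar
    · filter_upwards [eventually_ge_atTop (4 * (K * (K + 1)))] with n hn
      exact hlow n hn
    · exact Eventually.of_forall hup
  have hfin : ∀ n, μ (g n) ≠ ⊤ := fun n => measure_ne_top μ _
  have h2top : (1/2 : ENNReal) ≠ ⊤ := by norm_num
  apply (ENNReal.tendsto_toReal_iff hfin h2top).mp
  have hhalf : ((1/2 : ENNReal)).toReal = (1/2 : ℝ) := by norm_num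
  rw [hhalf]
  exact haZ
end

section
/- Let g : [0, ∞) → {1, 2, 3, …} be right-continuous and nondecreasing with g(u) → ∞ as u → ∞, let g⁻¹(n) = inf{u ≥ 0 : g(u) ≥ n}, and let D be the positive-integer-valued random variable with P(D ≥ n) = 1 − exp(−1/g⁻¹(n)). Suppose lim_{n→∞} n·P(D ≥ n) = c with 0 < c < ∞, that 0 < liminf_{n→∞} n²·P(D = n) ≤ limsup_{n→∞} n²·P(D = n) < ∞, and that Σ_{n=1}^∞ |c/n − P(D ≥ n)| < ∞. For 1 ≤ j ≤ n define γ(j, n) = Σ_{i=1}^j g((Σ_{l=1}^i 1/(n−l+1))⁻¹) + Σ_{i=1}^j g(min(j, (Σ_{l=1}^i 1/(n−l+1))⁻¹)) − n·E[min(j, D)]. Then inf_{n ≥ 1} (1/n)·min_{1 ≤ j ≤ n} γ(j, n) > −∞. -/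
open Filter
open scoped ENNReal

/-- `g⁻¹(n) = inf {u ≥ 0 : g(u) ≥ n}`. -/
noncomputable def ginv (g : ℝ → ℕ) (n : ℕ) : ℝ := sInf {u : ℝ | 0 ≤ u ∧ n ≤ g u}

/-- `P(D ≥ n)` for `D = g(1/X)`, `X` a rate-1 exponential:
`P(D ≥ n) = 1 − exp(−1/g⁻¹(n))` (equal to `1` when `g⁻¹(n) = 0`). -/
noncomputable def tailP (g : ℝ → ℕ) (n : ℕ) : ℝ :=
  if ginv g n = 0 then 1 else 1 - Real.exp (-1 / ginv g n)

/-- `P(D = n) = P(D ≥ n) − P(D ≥ n+1)`. -/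
noncomputable def pmfP (g : ℝ → ℕ) (n : ℕ) : ℝ := tailP g n - tailP g (n + 1)

/-- `(∑_{l=1}^i 1/(n−l+1))⁻¹`. -/
noncomputable def harmInv (n i : ℕ) : ℝ := (∑ l ∈ Finset.Icc 1 i, ((n : ℝ) - l + 1)⁻¹)⁻¹

/-- `γ(j,n) = ∑_{i=1}^j g((∑_{l=1}^i 1/(n−l+1))⁻¹)
  + ∑_{i=1}^j g(min(j, (∑_{l=1}^i 1/(n−l+1))⁻¹)) − n·E[min(j,D)]`,
where `E[min(j,D)] = ∑_{l=1}^j P(D ≥ l)`. -/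
noncomputable def gammaJN (g : ℝ → ℕ) (j n : ℕ) : ℝ :=
  (∑ i ∈ Finset.Icc 1 j, (g (harmInv n i) : ℝ))
    + (∑ i ∈ Finset.Icc 1 j, (g (min (j : ℝ) (harmInv n i)) : ℝ))
    - n * ∑ l ∈ Finset.Icc 1 j, tailP g l

/- ### Auxiliary lemmas -/

lemma ginv_nonneg (g : ℝ → ℕ) (n : ℕ) : 0 ≤ ginv g n :=
  Real.sInf_nonneg fun _ hx => hx.1

lemma tailP_nonneg (g : ℝ → ℕ) (n : ℕ) : 0 ≤ tailP g n := by
  unfold tailP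
  split_ifs with h
  · norm_num
  · have h1 : 0 < ginv g n := lt_of_le_of_ne (ginv_nonneg g n) (Ne.symm h)
    have h2 : Real.exp (-1 / ginv g n) ≤ 1 := by
      rw [Real.exp_le_one_iff, neg_div]
      have : 0 < (1:ℝ) / ginv g n := by positivity
      linarith
    linarith

lemma tailP_le_one (g : ℝ → ℕ) (n : ℕ) : tailP g n ≤ 1 := by
  unfold tailP
  split_ifs with h
  · exact le_refl _
  · have := Real.exp_pos (-1 / ginv g n); linarith

/-- If `u ≥ ginv g l` and `u ≥ 0` then `g u ≥ l`. -/
lemma le_g_of_ginv_le (g : ℝ → ℕ)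
    (hmono : MonotoneOn g (Set.Ici 0))
    (hrc : ∀ x, 0 ≤ x → ContinuousWithinAt g (Set.Ici x) x)
    (hinf : Tendsto g atTop atTop)
    (l : ℕ) (u : ℝ) (hu : 0 ≤ u) (h : ginv g l ≤ u) : l ≤ g u := by
  set S : Set ℝ := {v : ℝ | 0 ≤ v ∧ l ≤ g v} with hS
  have hne : S.Nonempty := by
    obtain ⟨x, hx1, hx2⟩ := ((hinf.eventually_ge_atTop l).and (eventually_ge_atTop (0:ℝ))).exists
    exact ⟨x, hx2, hx1⟩
  have hbdd : BddBelow S := ⟨0, fun x hx => hx.1⟩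
  have ha0 : 0 ≤ sInf S := Real.sInf_nonneg fun _ hx => hx.1
  have hginv : ginv g l = sInf S := rfl
  have hmem : l ≤ g (sInf S) := by
    have hcl : sInf S ∈ closure S := csInf_mem_closure hne hbdd
    have hnb : (nhdsWithin (sInf S) S).NeBot := mem_closure_iff_nhdsWithin_neBot.mp hcl
    have hsub : S ⊆ Set.Ici (sInf S) := fun x hx => csInf_le hbdd hx
    have htd : Tendsto g (nhdsWithin (sInf S) S) (nhds (g (sInf S))) :=
      (hrc (sInf S) ha0).mono_left (nhdsWithin_mono _ hsub)
    have hsing : ({g (sInf S)} : Set ℕ) ∈ nhds (g (sInf S)) :=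
      (isOpen_discrete _).mem_nhds rfl
    have hev : ∀ᶠ x in nhdsWithin (sInf S) S, g x ∈ ({g (sInf S)} : Set ℕ) := htd hsing
    have hev2 : ∀ᶠ x in nhdsWithin (sInf S) S, l ≤ g x :=
      eventually_nhdsWithin_of_forall (fun x hx => hx.2)
    obtain ⟨x, hx1, hx2⟩ := (hev.and hev2).exists
    rw [Set.mem_singleton_iff] at hx1
    rw [← hx1]; exact hx2
  refine hmem.trans (hmono ha0 hu ?_)
  rw [← hginv]; exact h

/-- `∑_{l=1}^m 1/l ≤ 1 + log m` for `m ≥ 1`. -/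
lemma sum_inv_le_log (m : ℕ) (hm : 1 ≤ m) :
    ∑ l ∈ Finset.Icc 1 m, ((l:ℝ))⁻¹ ≤ 1 + Real.log m := by
  induction m with
  | zero => omega
  | succ k ih =>
    rcases Nat.eq_or_lt_of_le hm with h1 | h1
    · simp [← h1]
    · have hk : 1 ≤ k := by omega
      have hkR : (1:ℝ) ≤ k := by exact_mod_cast hk
      rw [Finset.sum_Icc_succ_top (by omega : 1 ≤ k + 1)]
      have hstep : ((k:ℝ) + 1)⁻¹ ≤ Real.log (k + 1) - Real.log k := by
        have hx : (0:ℝ) < (k:ℝ) / (k + 1) := by positivity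
        have := Real.log_le_sub_one_of_pos hx
        rw [Real.log_div (by positivity) (by positivity)] at this
        have hne : ((k:ℝ) + 1) ≠ 0 := by positivity
        have : Real.log k - Real.log (k+1) ≤ (k:ℝ)/(k+1) - 1 := this
        have heq : (k:ℝ)/(k+1) - 1 = -((k:ℝ)+1)⁻¹ := by field_simp; ring
        rw [heq] at this
        linarith
      have := ih hk
      push_cast
      push_cast at this
      linarith
  
/-- `∑_{i=0}^{m-1} 1/(x+i+1) ≥ log(x+m+1) - log(x+1)` for `x ≥ 0`. -/
lemma log_le_sum_inv_shift (x : ℝ) (hx : 0 ≤ x) (m : ℕ) :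
    Real.log (x + m + 1) - Real.log (x + 1) ≤ ∑ i ∈ Finset.range m, (x + i + 1)⁻¹ := by
  induction m with
  | zero => simp
  | succ k ih =>
    rw [Finset.sum_range_succ]
    have hstep : Real.log (x + (k+1) + 1) - Real.log (x + k + 1) ≤ (x + k + 1)⁻¹ := by
      have hx1 : (0:ℝ) < x + k + 1 := by positivity
      have hx2 : (0:ℝ) < x + (k+1) + 1 := by positivity
      have hq : (0:ℝ) < (x + (k+1) + 1) / (x + k + 1) := by positivity
      have := Real.log_le_sub_one_of_pos hq
      rw [Real.log_div (by positivity) (by positivity)] at this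
      have heq : (x + (k+1) + 1) / (x + k + 1) - 1 = (x + k + 1)⁻¹ := by field_simp; ring
      rw [heq] at this
      linarith
    push_cast
    push_cast at ih hstep
    linarith

/-- `∑_{k=0}^{i-1} 1/(n-k) ≤ log n - log (n-i)` for `i < n`. -/
lemma harm_tail_le_log (n : ℕ) : ∀ i : ℕ, i < n →
    ∑ k ∈ Finset.range i, ((n:ℝ) - k)⁻¹ ≤ Real.log n - Real.log ((n:ℝ) - i) := by
  intro i
  induction i with
  | zero => intro _; simp
  | succ k ih =>
    intro hkn
    have hk : k < n := by omega
    have h1 : (1:ℝ) ≤ (n:ℝ) - (k+1) := by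
      have h2 : k + 2 ≤ n := by omega
      have : ((k:ℝ) + 2) ≤ (n:ℝ) := by exact_mod_cast h2
      linarith
    have hpos : (0:ℝ) < (n:ℝ) - (k+1) := by linarith
    have hpos2 : (0:ℝ) < (n:ℝ) - k := by linarith
    rw [Finset.sum_range_succ]
    have hstep : ((n:ℝ) - k)⁻¹ ≤ Real.log ((n:ℝ) - k) - Real.log ((n:ℝ) - (k+1)) := by
      have hq : (0:ℝ) < ((n:ℝ) - (k+1)) / ((n:ℝ) - k) := by positivity
      have := Real.log_le_sub_one_of_pos hq
      rw [Real.log_div (by positivity) (by positivity)] at this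
      have heq : ((n:ℝ) - (k+1)) / ((n:ℝ) - k) - 1 = -((n:ℝ) - k)⁻¹ := by field_simp; ring
      rw [heq] at this
      linarith
    have := ih hk
    push_cast at *
    linarith

/-- the harmonic partial sum appearing in `harmInv`, rewritten. -/
lemma harm_sum_eq (n i : ℕ) :
    ∑ l ∈ Finset.Icc 1 i, ((n : ℝ) - l + 1)⁻¹ = ∑ k ∈ Finset.range i, ((n:ℝ) - k)⁻¹ := by
  rw [show Finset.Icc 1 i = Finset.Ico 1 (i+1) by rw [Finset.Ico_add_one_right_eq_Icc]]
  rw [Finset.sum_Ico_eq_sum_range]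
  simp only [Nat.add_sub_cancel]
  apply Finset.sum_congr rfl
  intro k _
  push_cast
  ring_nf

lemma harm_sum_pos (n i : ℕ) (hi : 1 ≤ i) (hin : i ≤ n) :
    0 < ∑ l ∈ Finset.Icc 1 i, ((n : ℝ) - l + 1)⁻¹ := by
  apply Finset.sum_pos
  · intro l hl
    rw [Finset.mem_Icc] at hl
    have : (l:ℝ) ≤ n := by exact_mod_cast hl.2.trans hin
    have : (0:ℝ) < (n:ℝ) - l + 1 := by linarith
    positivity
  · exact ⟨1, by simp [hi]⟩

lemma harmInv_nonneg (n i : ℕ) (hi : 1 ≤ i) (hin : i ≤ n) : 0 ≤ harmInv n i :=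
  le_of_lt (by unfold harmInv; exact inv_pos.mpr (harm_sum_pos n i hi hin))

/-- Key counting step: if `1 ≤ i ≤ min(j, n-1, ⌊n·tailP g l⌋)` then `ginv g l ≤ harmInv n i`. -/
lemma ginv_le_harmInv (g : ℝ → ℕ) (n j l i : ℕ)
    (hj : 1 ≤ j) (hjn : j ≤ n)
    (hi1 : 1 ≤ i) (hij : i ≤ j) (hin1 : i + 1 ≤ n)
    (hifl : (i:ℝ) ≤ (n:ℝ) * tailP g l) :
    ginv g l ≤ harmInv n i := by
  have hin : i ≤ n := by omega
  have hspos := harm_sum_pos n i hi1 hin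
  rcases eq_or_lt_of_le (ginv_nonneg g l) with h0 | hpos
  · rw [← h0]
    exact harmInv_nonneg n i hi1 hin
  · -- ginv g l > 0
    have hne : ginv g l ≠ 0 := ne_of_gt hpos
    have htl : tailP g l = 1 - Real.exp (-1 / ginv g l) := by
      unfold tailP; rw [if_neg hne]
    -- from i ≤ n (1 - exp(-1/a)) : n * exp(-1/a) ≤ n - i
    have hnexp : (n:ℝ) * Real.exp (-1 / ginv g l) ≤ (n:ℝ) - i := by
      rw [htl] at hifl
      have hn0 : (0:ℝ) < n := by exact_mod_cast (by omega : 0 < n)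
      nlinarith [Real.exp_pos (-1 / ginv g l)]
    have hni : (0:ℝ) < (n:ℝ) - i := by
      have : (i:ℝ) + 1 ≤ n := by exact_mod_cast hin1
      linarith
    have hn0 : (0:ℝ) < n := by exact_mod_cast (by omega : 0 < n)
    -- log n - log (n - i) ≤ 1 / ginv g l
    have hlog : Real.log n - Real.log ((n:ℝ) - i) ≤ 1 / ginv g l := by
      have hexple : Real.exp (-1 / ginv g l) ≤ ((n:ℝ) - i) / n := by
        rw [le_div_iff₀ hn0]; linarith [hnexp]
      have := Real.log_le_log (Real.exp_pos _) hexple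
      rw [Real.log_exp, Real.log_div (ne_of_gt hni) (ne_of_gt hn0)] at this
      have : -1 / ginv g l ≤ Real.log ((n:ℝ) - i) - Real.log n := this
      have h2 : -(1 / ginv g l) ≤ Real.log ((n:ℝ) - i) - Real.log n := by
        rw [neg_div] at this; exact this
      linarith
    -- harmonic sum ≤ log n - log (n-i)
    have hharm : ∑ l' ∈ Finset.Icc 1 i, ((n : ℝ) - l' + 1)⁻¹ ≤ 1 / ginv g l := by
      rw [harm_sum_eq]
      exact (harm_tail_le_log n i (by omega)).trans hlog
    -- conclude
    unfold harmInv
    rw [← one_div]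
    calc ginv g l = 1 / (1 / ginv g l) := by field_simp
    _ ≤ 1 / (∑ l' ∈ Finset.Icc 1 i, ((n : ℝ) - l' + 1)⁻¹) := by
        apply one_div_le_one_div_of_le hspos hharm

/-- Combinatorial lower bound on the first sum in `gammaJN`. -/
lemma sum_g_harmInv_ge (g : ℝ → ℕ)
    (hmono : MonotoneOn g (Set.Ici 0))
    (hrc : ∀ x, 0 ≤ x → ContinuousWithinAt g (Set.Ici x) x)
    (hinf : Tendsto g atTop atTop)
    (n j : ℕ) (hj : 1 ≤ j) (hjn : j ≤ n) :
    ∑ l ∈ Finset.Icc 1 n, min ((j:ℝ)) ((n:ℝ) * tailP g l) - 2 * n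
      ≤ ∑ i ∈ Finset.Icc 1 j, (g (harmInv n i) : ℝ) := by
  -- natural number chain
  have step1 : ∀ i ∈ Finset.Icc 1 j,
      ((Finset.Icc 1 n).filter (fun l => ginv g l ≤ harmInv n i)).card ≤ g (harmInv n i) := by
    intro i hi
    rw [Finset.mem_Icc] at hi
    have hh : 0 ≤ harmInv n i := harmInv_nonneg n i hi.1 (hi.2.trans hjn)
    have hsub : (Finset.Icc 1 n).filter (fun l => ginv g l ≤ harmInv n i)
        ⊆ Finset.Icc 1 (g (harmInv n i)) := by
      intro l hl
      rw [Finset.mem_filter, Finset.mem_Icc] at hl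
      rw [Finset.mem_Icc]
      exact ⟨hl.1.1, le_g_of_ginv_le g hmono hrc hinf l _ hh hl.2⟩
    have := Finset.card_le_card hsub
    simpa using this
  have step2 : ∀ l ∈ Finset.Icc 1 n,
      min j (min (n-1) ⌊(n:ℝ) * tailP g l⌋₊)
        ≤ ((Finset.Icc 1 j).filter (fun i => ginv g l ≤ harmInv n i)).card := by
    intro l _
    set m : ℕ := min j (min (n-1) ⌊(n:ℝ) * tailP g l⌋₊) with hm
    have hsub : Finset.Icc 1 m ⊆ (Finset.Icc 1 j).filter (fun i => ginv g l ≤ harmInv n i) := by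
      intro i hi
      rw [Finset.mem_Icc] at hi
      have him : i ≤ m := hi.2
      have hij : i ≤ j := him.trans (min_le_left _ _)
      have hin1 : i + 1 ≤ n := by
        have := him.trans ((min_le_right _ _).trans (min_le_left _ _))
        omega
      have hifl : (i:ℝ) ≤ (n:ℝ) * tailP g l := by
        have hfl : i ≤ ⌊(n:ℝ) * tailP g l⌋₊ :=
          him.trans ((min_le_right _ _).trans (min_le_right _ _))
        have h0 : 0 ≤ (n:ℝ) * tailP g l := by
          have := tailP_nonneg g l; positivity
        exact (Nat.le_floor_iff h0).mp hfl
      rw [Finset.mem_filter, Finset.mem_Icc]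
      exact ⟨⟨hi.1, hij⟩, ginv_le_harmInv g n j l i hj hjn hi.1 hij hin1 hifl⟩
    have := Finset.card_le_card hsub
    simpa using this
  -- swap the double count
  have swap : ∑ l ∈ Finset.Icc 1 n,
        ((Finset.Icc 1 j).filter (fun i => ginv g l ≤ harmInv n i)).card
      = ∑ i ∈ Finset.Icc 1 j,
        ((Finset.Icc 1 n).filter (fun l => ginv g l ≤ harmInv n i)).card := by
    simp_rw [Finset.card_filter]
    exact Finset.sum_comm
  -- natural number inequality
  have hnat : ∑ l ∈ Finset.Icc 1 n, min j (min (n-1) ⌊(n:ℝ) * tailP g l⌋₊)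
      ≤ ∑ i ∈ Finset.Icc 1 j, g (harmInv n i) := by
    calc ∑ l ∈ Finset.Icc 1 n, min j (min (n-1) ⌊(n:ℝ) * tailP g l⌋₊)
        ≤ ∑ l ∈ Finset.Icc 1 n,
            ((Finset.Icc 1 j).filter (fun i => ginv g l ≤ harmInv n i)).card :=
          Finset.sum_le_sum step2
      _ = _ := swap
      _ ≤ ∑ i ∈ Finset.Icc 1 j, g (harmInv n i) := Finset.sum_le_sum step1
  -- cast to ℝ and compare with min (j, n t_l) - 2 termwise
  have hcast : (↑(∑ l ∈ Finset.Icc 1 n, min j (min (n-1) ⌊(n:ℝ) * tailP g l⌋₊)) : ℝ)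
      ≤ ∑ i ∈ Finset.Icc 1 j, (g (harmInv n i) : ℝ) := by
    rw [← Nat.cast_sum]
    exact_mod_cast Nat.cast_le.mpr hnat
  refine le_trans ?_ hcast
  rw [Nat.cast_sum]
  have : ∑ l ∈ Finset.Icc 1 n, min ((j:ℝ)) ((n:ℝ) * tailP g l) - 2 * n
      = ∑ l ∈ Finset.Icc 1 n, (min ((j:ℝ)) ((n:ℝ) * tailP g l) - 2) := by
    rw [Finset.sum_sub_distrib]
    simp [Nat.card_Icc]
    ring
  rw [this]
  apply Finset.sum_le_sum
  intro l hl
  -- min j (n t) - 2 ≤ cast of min j (min (n-1) floor)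
  have h1 : (0:ℝ) ≤ (n:ℝ) * tailP g l := by
    have := tailP_nonneg g l; positivity
  have hfloor : (n:ℝ) * tailP g l - 1 ≤ (⌊(n:ℝ) * tailP g l⌋₊ : ℝ) := by
    have := Nat.lt_floor_add_one ((n:ℝ) * tailP g l)
    linarith
  have htle : (n:ℝ) * tailP g l ≤ n := by
    have := tailP_le_one g l
    nlinarith [Nat.cast_nonneg (α := ℝ) n]
  have hn1 : ((min j (min (n-1) ⌊(n:ℝ) * tailP g l⌋₊) : ℕ) : ℝ)
      = min ((j:ℝ)) (min (((n-1:ℕ)):ℝ) ((⌊(n:ℝ) * tailP g l⌋₊:ℕ):ℝ)) := by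
    push_cast [Nat.cast_min]
    rfl
  rw [hn1]
  have hn' : 1 ≤ n := hj.trans hjn
  have hcastn1 : (((n-1:ℕ)):ℝ) = (n:ℝ) - 1 := by
    have : ((n:ℕ) : ℝ) - ((1:ℕ):ℝ) = (((n - 1:ℕ)):ℝ) := (Nat.cast_sub hn').symm
    push_cast at this ⊢
    linarith
  rw [hcastn1]
  -- now prove min j (nt) - 2 ≤ min j (min (n-1) floor)
  have hminl := min_le_left ((j:ℝ)) ((n:ℝ) * tailP g l)
  have hminr := min_le_right ((j:ℝ)) ((n:ℝ) * tailP g l)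
  refine le_min (by linarith) (le_min (by linarith) (by linarith))

set_option maxHeartbeats 1000000 in
/-- The purely analytic core inequality. -/
lemma analytic_core (c : ℝ) (hc : 0 < c) (n j : ℕ) (hj : 1 ≤ j) (hjn : j ≤ n) :
    ∑ l ∈ Finset.Icc 1 j, max ((n:ℝ) * c / l - j) 0
      ≤ ∑ l ∈ Finset.Icc (j+1) n, min ((j:ℝ)) ((n:ℝ) * c / l)
        + c * (1 + Real.log (2*c+1)) * n := by
  have hn1 : 1 ≤ n := hj.trans hjn
  have hnR : (1:ℝ) ≤ n := by exact_mod_cast hn1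
  have hjR : (1:ℝ) ≤ j := by exact_mod_cast hj
  have hjpos : (0:ℝ) < j := by linarith
  set L : ℝ := (n:ℝ) * c / j with hL
  have hLpos : 0 < L := by positivity
  have hj0 : (j:ℝ) ≠ 0 := ne_of_gt hjpos
  have hjL : (j:ℝ) * L = n * c := by rw [hL]; field_simp
  set P : ℕ := min j ⌊L⌋₊ with hP
  have hPj : P ≤ j := min_le_left _ _
  have hPL : (P:ℝ) ≤ L := by
    calc (P:ℝ) ≤ (⌊L⌋₊:ℝ) := by exact_mod_cast min_le_right j ⌊L⌋₊
    _ ≤ L := Nat.floor_le (le_of_lt hLpos)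
  -- second sum bound from below
  have hmin_ge : ∀ l ∈ Finset.Icc (j+1) n, (n:ℝ) * c / ((l:ℝ) + L)
      ≤ min ((j:ℝ)) ((n:ℝ) * c / l) := by
    intro l hl
    rw [Finset.mem_Icc] at hl
    have hl1 : (1:ℝ) ≤ l := by exact_mod_cast (by omega : 1 ≤ l)
    have hlpos : (0:ℝ) < l := by linarith
    apply le_min
    · rw [div_le_iff₀ (by positivity)]
      have : (j:ℝ) * ((l:ℝ) + L) = j * l + n * c := by rw [mul_add, hjL]
      nlinarith
    · apply div_le_div_of_nonneg_left (by positivity) hlpos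
      linarith
  have hsum2 : (n:ℝ) * c * (Real.log ((n:ℝ) + L + 1) - Real.log ((j:ℝ) + L + 1))
      ≤ ∑ l ∈ Finset.Icc (j+1) n, min ((j:ℝ)) ((n:ℝ) * c / l) := by
    have h1 : ∑ l ∈ Finset.Icc (j+1) n, (n:ℝ) * c / ((l:ℝ) + L)
        ≤ ∑ l ∈ Finset.Icc (j+1) n, min ((j:ℝ)) ((n:ℝ) * c / l) :=
      Finset.sum_le_sum hmin_ge
    refine le_trans ?_ h1
    -- rewrite as range sum
    have hIcc : Finset.Icc (j+1) n = Finset.Ico (j+1) (n+1) := by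
      rw [Finset.Ico_add_one_right_eq_Icc]
    rw [hIcc, Finset.sum_Ico_eq_sum_range]
    have hrange : ∀ i ∈ Finset.range (n + 1 - (j+1)), (n:ℝ) * c / ((((j+1+i:ℕ)):ℝ) + L)
        = (n:ℝ) * c * (((j:ℝ) + L) + i + 1)⁻¹ := by
      intro i _
      push_cast
      rw [div_eq_mul_inv]
      ring_nf
    rw [Finset.sum_congr rfl hrange, ← Finset.mul_sum]
    have hx : (0:ℝ) ≤ (j:ℝ) + L := by positivity
    have hlog := log_le_sum_inv_shift ((j:ℝ) + L) hx (n + 1 - (j+1))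
    have hm : (((n + 1 - (j+1)):ℕ):ℝ) = (n:ℝ) - j := by
      have : n + 1 - (j + 1) = n - j := by omega
      rw [this, Nat.cast_sub hjn]
    rw [hm] at hlog
    have heq1 : (j:ℝ) + L + ((n:ℝ) - j) + 1 = (n:ℝ) + L + 1 := by ring
    rw [heq1] at hlog
    have heq2 : (j:ℝ) + L + 1 = (j:ℝ) + L + 1 := rfl
    exact mul_le_mul_of_nonneg_left hlog (by positivity : (0:ℝ) ≤ (n:ℝ) * c)
  -- first sum bound from above
  have hzero : ∀ l ∈ Finset.Icc (P+1) j, max ((n:ℝ) * c / l - j) 0 = 0 := by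
    intro l hl
    rw [Finset.mem_Icc] at hl
    have hfloorlt : (P:ℕ) < l := hl.1
    have hlgtL : L < l := by
      have hfl : ⌊L⌋₊ < l := by
        by_contra hcon
        push_neg at hcon
        have : l ≤ P := le_min hl.2 hcon
        omega
      have h2 : (⌊L⌋₊:ℝ) + 1 ≤ l := by exact_mod_cast hfl
      have := Nat.lt_floor_add_one L
      linarith
    have hlpos : (0:ℝ) < l := lt_trans hLpos hlgtL
    have : (n:ℝ) * c / l < j := by
      rw [div_lt_iff₀ hlpos]
      have : (j:ℝ) * L < j * l := by
        apply mul_lt_mul_of_pos_left hlgtL hjpos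
      nlinarith
    apply max_eq_right
    linarith
  have hsplit1 : ∑ l ∈ Finset.Icc 1 j, max ((n:ℝ) * c / l - j) 0
      = ∑ l ∈ Finset.Icc 1 P, max ((n:ℝ) * c / l - j) 0 := by
    have : Finset.Icc 1 j = Finset.Ioc 0 j := by rw [← Finset.Icc_add_one_left_eq_Ioc]; rfl
    rw [this]
    have hP' : Finset.Icc 1 P = Finset.Ioc 0 P := by rw [← Finset.Icc_add_one_left_eq_Ioc]; rfl
    rw [hP']
    have hPj' : (0:ℕ) ≤ P := Nat.zero_le _
    rw [← Finset.sum_Ioc_consecutive _ (Nat.zero_le P) hPj]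
    have : ∑ l ∈ Finset.Ioc P j, max ((n:ℝ) * c / l - j) 0 = 0 := by
      apply Finset.sum_eq_zero
      intro l hl
      rw [Finset.mem_Ioc] at hl
      exact hzero l (Finset.mem_Icc.mpr ⟨hl.1, hl.2⟩)
    rw [this, add_zero]
  have hsum1 : ∑ l ∈ Finset.Icc 1 P, max ((n:ℝ) * c / l - j) 0
      ≤ (n:ℝ) * c * ∑ l ∈ Finset.Icc 1 P, ((l:ℝ))⁻¹ := by
    rw [Finset.mul_sum]
    apply Finset.sum_le_sum
    intro l hl
    rw [Finset.mem_Icc] at hl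
    have hlpos : (0:ℝ) < l := by exact_mod_cast (by omega : 0 < l)
    apply max_le
    · rw [div_eq_mul_inv]
      have : (0:ℝ) ≤ j := by positivity
      nlinarith [inv_pos.mpr hlpos]
    · positivity
  -- combine
  rcases Nat.eq_zero_or_pos P with hP0 | hPpos
  · -- P = 0 : LHS = 0
    rw [hsplit1, hP0]
    simp only [Finset.Icc_self, Finset.Icc_eq_empty_of_lt (by omega : (1:ℕ) > 0)]
    have hrhs : 0 ≤ ∑ l ∈ Finset.Icc (j+1) n, min ((j:ℝ)) ((n:ℝ) * c / l) := by
      apply Finset.sum_nonneg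
      intro l hl
      rw [Finset.mem_Icc] at hl
      have : (0:ℝ) < l := by exact_mod_cast (by omega : 0 < l)
      apply le_min (by positivity) (by positivity)
    have : (0:ℝ) ≤ c * (1 + Real.log (2*c+1)) * n := by
      have hlog : 0 ≤ Real.log (2*c+1) := Real.log_nonneg (by linarith)
      positivity
    simp
    linarith
  · -- P ≥ 1
    have hPR : (1:ℝ) ≤ P := by exact_mod_cast hPpos
    have hlogsum := sum_inv_le_log P hPpos
    rw [hsplit1]
    have h1 : ∑ l ∈ Finset.Icc 1 P, max ((n:ℝ) * c / l - j) 0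
        ≤ (n:ℝ) * c * (1 + Real.log P) := by
      refine hsum1.trans ?_
      apply mul_le_mul_of_nonneg_left hlogsum (by positivity)
    refine h1.trans ?_
    refine le_trans ?_ (add_le_add_left hsum2 _)
    -- key log comparison
    have hkey : Real.log P + Real.log ((j:ℝ) + L + 1) ≤ Real.log (2*c+1) + Real.log ((n:ℝ) + L + 1) := by
      rw [← Real.log_mul (by positivity) (by positivity), ← Real.log_mul (by positivity) (by positivity)]
      apply Real.log_le_log (by positivity)
      have e1 : (P:ℝ) * j ≤ n * c := by
        calc (P:ℝ) * j ≤ L * j := by nlinarith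
        _ = n * c := by rw [mul_comm]; exact hjL
      have e2 : (P:ℝ) * L ≤ n * c := by
        have : (P:ℝ) ≤ j := by exact_mod_cast hPj
        nlinarith
      have e3 : (P:ℝ) ≤ n := by
        have : (P:ℝ) ≤ j := by exact_mod_cast hPj
        have : (j:ℝ) ≤ n := by exact_mod_cast hjn
        linarith [show (P:ℝ) ≤ j from by exact_mod_cast hPj]
      have e4 : (0:ℝ) ≤ (2*c+1) * (L + 1) := by positivity
      have expand1 : (P:ℝ) * ((j:ℝ) + L + 1) = (P:ℝ)*(j:ℝ) + (P:ℝ)*L + P := by ring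
      have expand2 : (2*c+1) * ((n:ℝ) + L + 1) = 2*((n:ℝ)*c) + n + (2*c+1)*(L+1) := by ring
      linarith [e1, e2, e3, e4]
    have hn0 : (0:ℝ) < (n:ℝ) * c := by positivity
    nlinarith [mul_le_mul_of_nonneg_left hkey (le_of_lt hn0)]

/-- Assemble: the probabilistic sum bound. -/
lemma prob_sum_bound (g : ℝ → ℕ) (c : ℝ) (hc : 0 < c)
    (hsum : Summable fun n : ℕ => |c / (n + 1) - tailP g (n + 1)|)
    (n j : ℕ) (hj : 1 ≤ j) (hjn : j ≤ n) :
    (n:ℝ) * ∑ l ∈ Finset.Icc 1 j, tailP g l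
      ≤ ∑ l ∈ Finset.Icc 1 n, min ((j:ℝ)) ((n:ℝ) * tailP g l)
        + ((∑' k : ℕ, |c / ((k:ℝ) + 1) - tailP g (k + 1)|) + c * (1 + Real.log (2*c+1))) * n := by
  set S : ℝ := ∑' k : ℕ, |c / ((k:ℝ) + 1) - tailP g (k + 1)| with hS
  set e : ℕ → ℝ := fun l => |c / (l:ℝ) - tailP g l| with he
  have he_nonneg : ∀ l, 0 ≤ e l := fun l => abs_nonneg _
  -- sum of e over Icc 1 n is at most S
  have hesum : ∑ l ∈ Finset.Icc 1 n, e l ≤ S := by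
    have : ∑ l ∈ Finset.Icc 1 n, e l
        = ∑ k ∈ Finset.range n, |c / ((k:ℝ) + 1) - tailP g (k + 1)| := by
      rw [show Finset.Icc 1 n = Finset.Ico 1 (n+1) by rw [Finset.Ico_add_one_right_eq_Icc]]
      rw [Finset.sum_Ico_eq_sum_range]
      simp only [Nat.add_sub_cancel]
      apply Finset.sum_congr rfl
      intro k _
      simp only [he]
      norm_num [add_comm 1 k]
    rw [this, hS]
    exact Summable.sum_le_tsum _ (fun k _ => abs_nonneg _) hsum
  -- split Icc 1 n at j
  have hsplit : ∑ l ∈ Finset.Icc 1 n, min ((j:ℝ)) ((n:ℝ) * tailP g l)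
      = ∑ l ∈ Finset.Icc 1 j, min ((j:ℝ)) ((n:ℝ) * tailP g l)
        + ∑ l ∈ Finset.Icc (j+1) n, min ((j:ℝ)) ((n:ℝ) * tailP g l) := by
    rw [show Finset.Icc 1 n = Finset.Ioc 0 n by rw [← Finset.Icc_add_one_left_eq_Ioc]; rfl,
        show Finset.Icc 1 j = Finset.Ioc 0 j by rw [← Finset.Icc_add_one_left_eq_Ioc]; rfl,
        show Finset.Icc (j+1) n = Finset.Ioc j n by rw [← Finset.Icc_add_one_left_eq_Ioc]]
    rw [Finset.sum_Ioc_consecutive _ (Nat.zero_le j) hjn]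
  have hesplit : ∑ l ∈ Finset.Icc 1 j, e l + ∑ l ∈ Finset.Icc (j+1) n, e l
      = ∑ l ∈ Finset.Icc 1 n, e l := by
    rw [show Finset.Icc 1 n = Finset.Ioc 0 n by rw [← Finset.Icc_add_one_left_eq_Ioc]; rfl,
        show Finset.Icc 1 j = Finset.Ioc 0 j by rw [← Finset.Icc_add_one_left_eq_Ioc]; rfl,
        show Finset.Icc (j+1) n = Finset.Ioc j n by rw [← Finset.Icc_add_one_left_eq_Ioc]]
    rw [Finset.sum_Ioc_consecutive _ (Nat.zero_le j) hjn]
  -- claim1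
  have claim1 : (n:ℝ) * ∑ l ∈ Finset.Icc 1 j, tailP g l
      - ∑ l ∈ Finset.Icc 1 j, min ((j:ℝ)) ((n:ℝ) * tailP g l)
      ≤ ∑ l ∈ Finset.Icc 1 j, max ((n:ℝ) * c / l - j) 0
        + (n:ℝ) * ∑ l ∈ Finset.Icc 1 j, e l := by
    rw [Finset.mul_sum, Finset.mul_sum, ← Finset.sum_sub_distrib, ← Finset.sum_add_distrib]
    apply Finset.sum_le_sum
    intro l hl
    rw [Finset.mem_Icc] at hl
    have hlpos : (0:ℝ) < l := by exact_mod_cast (by omega : 0 < l)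
    have habs : tailP g l ≤ c / l + e l := by
      have : -|c / (l:ℝ) - tailP g l| ≤ c / (l:ℝ) - tailP g l := neg_abs_le _
      simp only [he]; linarith
    have hn0 : (0:ℝ) ≤ n := Nat.cast_nonneg n
    rcases le_total ((n:ℝ) * tailP g l) ((j:ℝ)) with h | h
    · rw [min_eq_right h]
      have : (0:ℝ) ≤ max ((n:ℝ) * c / l - j) 0 := le_max_right _ _
      have : (0:ℝ) ≤ (n:ℝ) * e l := by positivity
      nlinarith [le_max_right ((n:ℝ) * c / l - j) 0]
    · rw [min_eq_left h]
      have h2 : (n:ℝ) * tailP g l - j ≤ (n:ℝ) * c / l - j + n * e l := by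
        have : (n:ℝ) * tailP g l ≤ n * (c / l + e l) := by
          apply mul_le_mul_of_nonneg_left habs hn0
        have heq : (n:ℝ) * (c / l) = n * c / l := by ring
        nlinarith
      calc (n:ℝ) * tailP g l - j ≤ (n:ℝ) * c / l - j + n * e l := h2
        _ ≤ max ((n:ℝ) * c / l - j) 0 + n * e l := by
            have := le_max_left ((n:ℝ) * c / l - j) 0; linarith
  -- claim2
  have claim2 : ∑ l ∈ Finset.Icc (j+1) n, min ((j:ℝ)) ((n:ℝ) * c / l)
      ≤ ∑ l ∈ Finset.Icc (j+1) n, min ((j:ℝ)) ((n:ℝ) * tailP g l)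
        + (n:ℝ) * ∑ l ∈ Finset.Icc (j+1) n, e l := by
    rw [Finset.mul_sum, ← Finset.sum_add_distrib]
    apply Finset.sum_le_sum
    intro l hl
    rw [Finset.mem_Icc] at hl
    have hlpos : (0:ℝ) < l := by exact_mod_cast (by omega : 0 < l)
    have hn0 : (0:ℝ) ≤ n := Nat.cast_nonneg n
    have habs : c / l ≤ tailP g l + e l := by
      have : c / l - tailP g l ≤ |c / (l:ℝ) - tailP g l| := le_abs_self _
      simp only [he]; linarith
    have h1 : (n:ℝ) * c / l ≤ (n:ℝ) * tailP g l + n * e l := by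
      have : (n:ℝ) * (c / l) ≤ n * (tailP g l + e l) :=
        mul_le_mul_of_nonneg_left habs hn0
      have heq : (n:ℝ) * (c / l) = n * c / l := by ring
      nlinarith
    have h2 : min ((j:ℝ)) ((n:ℝ) * c / l) ≤ min ((j:ℝ)) ((n:ℝ) * tailP g l + n * e l) := by
      apply min_le_min (le_refl _) h1
    refine h2.trans ?_
    have hne : (0:ℝ) ≤ (n:ℝ) * e l := by
      have := he_nonneg l; positivity
    calc min ((j:ℝ)) ((n:ℝ) * tailP g l + n * e l)
        ≤ min ((j:ℝ) + n * e l) ((n:ℝ) * tailP g l + n * e l) :=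
          min_le_min (by linarith) (le_refl _)
      _ = min ((j:ℝ)) ((n:ℝ) * tailP g l) + n * e l := min_add_add_right _ _ _
  have core := analytic_core c hc n j hj hjn
  have hS_nonneg : 0 ≤ S := tsum_nonneg (fun k => abs_nonneg _)
  have hnR : (1:ℝ) ≤ n := by exact_mod_cast hj.trans hjn
  have hmulS : (n:ℝ) * (∑ l ∈ Finset.Icc 1 j, e l + ∑ l ∈ Finset.Icc (j+1) n, e l) ≤ n * S := by
    apply mul_le_mul_of_nonneg_left _ (by linarith : (0:ℝ) ≤ n)
    rw [hesplit]; exact hesum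
  rw [hsplit]
  nlinarith [claim1, claim2, core, hmulS]

/-- Lemma 3: under the hypotheses of part (c),
`inf_{n ≥ 1} (1/n) min_{1 ≤ j ≤ n} γ(j,n) > −∞`. -/
theorem gammaJN_bounded_below (g : ℝ → ℕ)
    (hg1 : ∀ x, 0 ≤ x → 1 ≤ g x)
    (hmono : MonotoneOn g (Set.Ici 0))
    (hrc : ∀ x, 0 ≤ x → ContinuousWithinAt g (Set.Ici x) x)
    (hinf : Tendsto g atTop atTop)
    (c : ℝ) (hc : 0 < c)
    (htail : Tendsto (fun n : ℕ => (n : ℝ) * tailP g n) atTop (nhds c))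
    (hliminf : 0 < liminf (fun n : ℕ => ENNReal.ofReal ((n : ℝ) ^ 2 * pmfP g n)) atTop)
    (hlimsup : limsup (fun n : ℕ => ENNReal.ofReal ((n : ℝ) ^ 2 * pmfP g n)) atTop < ⊤)
    (hsum : Summable fun n : ℕ => |c / (n + 1) - tailP g (n + 1)|) :
    ∃ B : ℝ, ∀ n j : ℕ, 1 ≤ j → j ≤ n → B ≤ gammaJN g j n / n := by
  set S : ℝ := ∑' k : ℕ, |c / ((k:ℝ) + 1) - tailP g (k + 1)| with hS
  refine ⟨-(2 + S + c * (1 + Real.log (2*c+1))), ?_⟩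
  intro n j hj hjn
  have hn1 : 1 ≤ n := hj.trans hjn
  have hnpos : (0:ℝ) < n := by exact_mod_cast (by omega : 0 < n)
  rw [le_div_iff₀ hnpos]
  -- second sum is nonneg
  have hB : (0:ℝ) ≤ ∑ i ∈ Finset.Icc 1 j, (g (min (j : ℝ) (harmInv n i)) : ℝ) := by
    apply Finset.sum_nonneg
    intro i _
    exact Nat.cast_nonneg _
  have hA := sum_g_harmInv_ge g hmono hrc hinf n j hj hjn
  have hP := prob_sum_bound g c hc hsum n j hj hjn
  unfold gammaJN
  rw [← hS] at hP
  nlinarith [hA, hB, hP]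
end
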